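/- arXiv:2202.04349 — 3 statements merged into one kernel-verified Lean document; each statement's English description precedes it below -/
import Mathlib

section
/- For every pivot (v, i) ∈ [1,m] × [1,n], there exists at most one minimal fixed-interval with pivot (v, i). -/
/-- Ordered binary trees (possibly empty). -/
inductive BTree : Type
  | nil : BTree
  | node : BTree → BTree → BTree
  deriving DecidableEq

/-- The minimum value of a list of integers (with default `0` for the empty list). -/
noncomputable def minval (l : List ℤ) : ℤ := l.minimum.untopD 0

/-- The 0-based index of the leftmost occurrence of the minimum value. -/
noncomputable def minidx0 (l : List ℤ) : ℕ := l.idxOf (minval l)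

theorem minidx0_lt_length {l : List ℤ} (h : l ≠ []) : minidx0 l < l.length := by
  obtain ⟨a, ha⟩ := WithTop.ne_top_iff_exists.mp (List.minimum_ne_top_of_ne_nil h)
  have hmem : a ∈ l := List.minimum_mem ha.symm
  have hval : minval l = a := by simp [minval, ← ha]
  rw [minidx0, hval]
  exact List.idxOf_lt_length_iff.mpr hmem

/-- The Cartesian tree of a string of integers. -/
noncomputable def CT (l : List ℤ) : BTree :=
  if h : l = [] then .nil
  else .node (CT (l.take (minidx0 l))) (CT (l.drop (minidx0 l + 1)))
termination_by l.length
decreasing_by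
  · have := minidx0_lt_length h
    simp [List.length_take]
    omega
  · have : 0 < l.length := List.length_pos_iff.mpr h
    simp [List.length_drop]
    omega

/-- The value of the 1-based position `i` of the string `T` (default `0`). -/
def val (T : List ℤ) (i : ℕ) : ℤ := T.getD (i - 1) 0

/-- `IsSubSeq n m I` : `I` is a strictly increasing sequence of `m` subscripts in `[1, n]`. -/
def IsSubSeq (n m : ℕ) (I : List ℕ) : Prop :=
  I.length = m ∧ I.Pairwise (· < ·) ∧ ∀ j ∈ I, 1 ≤ j ∧ j ≤ n

/-- The subsequence `T_I` of `T` selected by the (1-based) subscript sequence `I`. -/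
def seqAt (T : List ℤ) (I : List ℕ) : List ℤ := I.map (val T)

/-- The substring `P[a..b]` of `P` (1-based, inclusive). -/
def subslice (P : List ℤ) (a b : ℕ) : List ℤ := (P.take b).drop (a - 1)

/-- The left end of the maximal interval around position `v` in which `P[v]` is minimal:
one plus the rightmost position `j < v` carrying a value smaller than `P[v]` (or `1`). -/
def leftEnd (P : List ℤ) (v : ℕ) : ℕ :=
  (((Finset.Icc 1 (v - 1)).filter (fun j => val P j < val P v)).max.unbotD 0) + 1

/-- The right end of the maximal interval around position `v` in which `P[v]` is minimal:
the leftmost position `j > v` carrying a value smaller than `P[v]`, minus one (or `|P|`). -/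
def rightEnd (P : List ℤ) (v : ℕ) : ℕ :=
  (((Finset.Icc (v + 1) P.length).filter (fun j => val P j < val P v)).min.untopD
    (P.length + 1)) - 1

/-- `P_v`: the substring of `P` spanned by the subtree of `CT(P)` rooted at node `v`
(nodes are identified with 1-based positions of `P`). -/
def Psub (P : List ℤ) (v : ℕ) : List ℤ := subslice P (leftEnd P v) (rightEnd P v)

/-- The left child `v.L` of node `v` in `CT(P)` (as a 1-based position), if it exists. -/
noncomputable def leftChild (P : List ℤ) (v : ℕ) : Option ℕ :=
  if leftEnd P v < v then some (leftEnd P v + minidx0 (subslice P (leftEnd P v) (v - 1)))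
  else none

/-- The right child `v.R` of node `v` in `CT(P)` (as a 1-based position), if it exists. -/
noncomputable def rightChild (P : List ℤ) (v : ℕ) : Option ℕ :=
  if v < rightEnd P v then some (v + 1 + minidx0 (subslice P (v + 1) (rightEnd P v)))
  else none

/-- `[ℓ, r]` is a fixed-interval with pivot `(v, i)`. -/
def IsFixedInterval (T P : List ℤ) (v i ℓ r : ℕ) : Prop :=
  1 ≤ ℓ ∧ r ≤ T.length ∧
    ∃ I : List ℕ, IsSubSeq T.length (Psub P v).length I ∧ i ∈ I ∧
      (∀ j ∈ I, ℓ ≤ j ∧ j ≤ r) ∧ CT (seqAt T I) = CT (Psub P v) ∧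
      val T i = minval (seqAt T I)

/-- `IntervalSsubset (ℓ', r') (ℓ, r)` : the interval `[ℓ', r']` is strictly contained
in the interval `[ℓ, r]`. -/
def IntervalSsubset (p q : ℕ × ℕ) : Prop := q.1 ≤ p.1 ∧ p.2 ≤ q.2 ∧ p ≠ q

/-- `[ℓ, r]` is a minimal fixed-interval with pivot `(v, i)`. -/
def IsMinFixedInterval (T P : List ℤ) (v i ℓ r : ℕ) : Prop :=
  IsFixedInterval T P v i ℓ r ∧
    ¬∃ ℓ' r', IsFixedInterval T P v i ℓ' r' ∧ IntervalSsubset (ℓ', r') (ℓ, r)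

open Classical in
/-- The left endpoint `L(v, i)` of the minimal fixed-interval `mfi(v, i)`,
which is `-∞` (i.e. `⊥`) if no (minimal) fixed-interval with pivot `(v, i)` exists. -/
noncomputable def mfiL (T P : List ℤ) (v i : ℕ) : WithBot ℕ :=
  if h : ∃ ℓ r, IsMinFixedInterval T P v i ℓ r then (h.choose : WithBot ℕ) else ⊥

open Classical in
/-- The right endpoint `R(v, i)` of the minimal fixed-interval `mfi(v, i)`,
which is `∞` (i.e. `⊤`) if no (minimal) fixed-interval with pivot `(v, i)` exists. -/
noncomputable def mfiR (T P : List ℤ) (v i : ℕ) : WithTop ℕ :=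
  if h : ∃ ℓ r, IsMinFixedInterval T P v i ℓ r then (h.choose_spec.choose : WithTop ℕ) else ⊤

/-- `I` is a trace of pattern `P` in text `T`. -/
def IsTrace (T P : List ℤ) (I : List ℕ) : Prop :=
  IsSubSeq T.length P.length I ∧ CT (seqAt T I) = CT P

/-- `[ℓ, r]` is an occurrence interval for `P` over `T`. -/
def IsOccInterval (T P : List ℤ) (ℓ r : ℕ) : Prop :=
  1 ≤ ℓ ∧ r ≤ T.length ∧ ∃ I, IsTrace T P I ∧ ∀ j ∈ I, ℓ ≤ j ∧ j ≤ r

/-- `[ℓ, r]` is a minimal occurrence interval for `P` over `T`. -/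
def IsMinOccInterval (T P : List ℤ) (ℓ r : ℕ) : Prop :=
  IsOccInterval T P ℓ r ∧
    ¬∃ ℓ' r', IsOccInterval T P ℓ' r' ∧ IntervalSsubset (ℓ', r') (ℓ, r)


namespace CTAux

/-- number of nodes of a binary tree -/
def bsize : BTree → ℕ
  | .nil => 0
  | .node l r => bsize l + bsize r + 1

theorem size_CT (l : List ℤ) : bsize (CT l) = l.length := by
  by_cases h : l = []
  · subst h; rw [CT]; simp [bsize]
  · rw [CT]
    simp only [h, dif_neg, not_false_iff, bsize]
    rw [size_CT, size_CT]
    have h1 := minidx0_lt_length h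
    simp [List.length_take, List.length_drop]
    omega
termination_by l.length
decreasing_by
  · have := minidx0_lt_length h
    simp [List.length_take]; omega
  · have : 0 < l.length := List.length_pos_iff.mpr h
    simp [List.length_drop]; omega

theorem val_inj (T : List ℤ) (hT : T.Nodup) {a b : ℕ} (ha1 : 1 ≤ a) (ha2 : a ≤ T.length)
    (hb1 : 1 ≤ b) (hb2 : b ≤ T.length) (h : val T a = val T b) : a = b := by
  have ha : a - 1 < T.length := by omega
  have hb : b - 1 < T.length := by omega
  rw [val, val, List.getD_eq_getElem _ _ ha, List.getD_eq_getElem _ _ hb] at h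
  have := (List.Nodup.getElem_inj_iff hT).mp h
  omega

theorem minval_eq (A B : List ℤ) (m : ℤ) (hA : ∀ x ∈ A, m < x) (hB : ∀ x ∈ B, m < x) :
    minval (A ++ m :: B) = m := by
  have hmin : (A ++ m :: B).minimum = (m : WithTop ℤ) := by
    rw [List.minimum_eq_coe_iff]
    constructor
    · exact List.mem_append_cons_self
    · intro a ha
      rcases List.mem_append.mp ha with h | h
      · exact le_of_lt (hA a h)
      · rcases List.mem_cons.mp h with h | h
        · exact le_of_eq h.symm
        · exact le_of_lt (hB a h)
  rw [minval, hmin]; rfl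

theorem minidx0_eq (A B : List ℤ) (m : ℤ) (hA : ∀ x ∈ A, m < x) (hB : ∀ x ∈ B, m < x) :
    minidx0 (A ++ m :: B) = A.length := by
  rw [minidx0, minval_eq A B m hA hB]
  have hmA : m ∉ A := fun h => absurd rfl (ne_of_gt (hA m h))
  rw [List.idxOf_append_of_notMem hmA]
  simp [List.idxOf_cons_self]

theorem CT_append (A B : List ℤ) (m : ℤ) (hA : ∀ x ∈ A, m < x) (hB : ∀ x ∈ B, m < x) :
    CT (A ++ m :: B) = .node (CT A) (CT B) := by
  have hne : A ++ m :: B ≠ [] := by simp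
  rw [CT]
  simp only [hne, dif_neg, not_false_iff]
  rw [minidx0_eq A B m hA hB]
  congr 1
  · congr 1
    exact List.take_left
  · congr 1
    have : A.length + 1 = (A ++ [m]).length := by simp
    rw [this]
    have : A ++ m :: B = (A ++ [m]) ++ B := by simp
    rw [this, List.drop_left]

theorem minval_le (l : List ℤ) (x : ℤ) (hx : x ∈ l) : minval l ≤ x := by
  have hne : l ≠ [] := List.ne_nil_of_mem hx
  obtain ⟨a, ha⟩ := WithTop.ne_top_iff_exists.mp (List.minimum_ne_top_of_ne_nil hne)
  have : minval l = a := by simp [minval, ← ha]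
  rw [this]
  have h := List.minimum_le_of_mem' hx
  rw [← ha] at h
  exact_mod_cast h

/-- Decomposition of a fixed-interval witness around the pivot position. -/
theorem witness_decomp (T P : List ℤ) (hT : T.Nodup) (v i : ℕ)
    (I : List ℕ) (hsub : IsSubSeq T.length (Psub P v).length I) (hiI : i ∈ I)
    (hct : CT (seqAt T I) = CT (Psub P v))
    (hmin : val T i = minval (seqAt T I)) :
    ∃ s t, I = s ++ i :: t ∧
      (∀ x ∈ s, x < i) ∧ (∀ x ∈ t, i < x) ∧
      (∀ x ∈ s, val T i < val T x) ∧ (∀ x ∈ t, val T i < val T x) ∧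
      s.length = minidx0 (Psub P v) ∧
      CT (seqAt T s) = CT ((Psub P v).take (minidx0 (Psub P v))) ∧
      CT (seqAt T t) = CT ((Psub P v).drop (minidx0 (Psub P v) + 1)) := by
  obtain ⟨s, t, rfl⟩ := List.append_of_mem hiI
  obtain ⟨hlen, hsort, hbd⟩ := hsub
  have hs : ∀ x ∈ s, x < i := by
    intro x hx
    have := (List.pairwise_append.mp hsort).2.2 x hx i (List.mem_cons_self)
    exact this
  have ht : ∀ x ∈ t, i < x := by
    intro x hx
    have := (List.pairwise_cons.mp (List.pairwise_append.mp hsort).2.1).1 x hx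
    exact this
  have hvals : ∀ x ∈ s ++ i :: t, val T i ≤ val T x := by
    intro x hx
    rw [hmin]
    exact minval_le _ _ (List.mem_map_of_mem hx)
  have hvs : ∀ x ∈ s, val T i < val T x := by
    intro x hx
    have hle := hvals x (List.mem_append_left _ hx)
    rcases lt_or_eq_of_le hle with h | h
    · exact h
    · exfalso
      have hxb := hbd x (List.mem_append_left _ hx)
      have hib := hbd i hiI
      have := val_inj T hT hib.1 hib.2 hxb.1 hxb.2 h
      have := hs x hx; omega
  have hvt : ∀ x ∈ t, val T i < val T x := by
    intro x hx
    have hle := hvals x (List.mem_append_right _ (List.mem_cons_of_mem _ hx))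
    rcases lt_or_eq_of_le hle with h | h
    · exact h
    · exfalso
      have hxb := hbd x (List.mem_append_right _ (List.mem_cons_of_mem _ hx))
      have hib := hbd i hiI
      have := val_inj T hT hib.1 hib.2 hxb.1 hxb.2 h
      have := ht x hx; omega
  have hseq : seqAt T (s ++ i :: t) = seqAt T s ++ val T i :: seqAt T t := by
    simp [seqAt]
  have hvs' : ∀ y ∈ seqAt T s, val T i < y := by
    intro y hy
    obtain ⟨x, hx, rfl⟩ := List.mem_map.mp hy
    exact hvs x hx
  have hvt' : ∀ y ∈ seqAt T t, val T i < y := by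
    intro y hy
    obtain ⟨x, hx, rfl⟩ := List.mem_map.mp hy
    exact hvt x hx
  have hctI : CT (seqAt T (s ++ i :: t)) = .node (CT (seqAt T s)) (CT (seqAt T t)) := by
    rw [hseq]; exact CT_append _ _ _ hvs' hvt'
  have hPvne : Psub P v ≠ [] := by
    intro h
    rw [h] at hlen
    simp at hlen
  have hctP : CT (Psub P v) =
      .node (CT ((Psub P v).take (minidx0 (Psub P v)))) (CT ((Psub P v).drop (minidx0 (Psub P v) + 1))) := by
    rw [CT]; simp [hPvne]
  rw [hctI, hctP] at hct
  injection hct with hL hR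
  have hslen : s.length = minidx0 (Psub P v) := by
    have h1 : bsize (CT (seqAt T s)) = bsize (CT ((Psub P v).take (minidx0 (Psub P v)))) := by rw [hL]
    rw [size_CT, size_CT] at h1
    have h2 : (seqAt T s).length = s.length := by simp [seqAt]
    have h3 := minidx0_lt_length hPvne
    rw [h2, List.length_take] at h1
    omega
  exact ⟨s, t, rfl, hs, ht, hvs, hvt, hslen, hL, hR⟩

/-- Crossing lemma: from fixed-intervals `[ℓ,r]` and `[ℓ',r']` (same pivot), `[ℓ',r]` is
a fixed-interval provided it contains `i` (which is automatic). -/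
theorem cross_fixed (T P : List ℤ) (hT : T.Nodup) (v i ℓ r ℓ' r' : ℕ)
    (h1 : IsFixedInterval T P v i ℓ r) (h2 : IsFixedInterval T P v i ℓ' r') :
    IsFixedInterval T P v i ℓ' r := by
  obtain ⟨hℓ1, hr1, I, hsubI, hiI, hbdI, hctI, hminI⟩ := h1
  obtain ⟨hℓ2, hr2, I', hsubI', hiI', hbdI', hctI', hminI'⟩ := h2
  obtain ⟨s, t, hIe, hs_lt, ht_gt, hvs, hvt, hslen, hLs, hRt⟩ :=
    witness_decomp T P hT v i I hsubI hiI hctI hminI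
  obtain ⟨s', t', hIe', hs'_lt, ht'_gt, hvs', hvt', hslen', hLs', hRt'⟩ :=
    witness_decomp T P hT v i I' hsubI' hiI' hctI' hminI'
  have hib := hbdI i hiI
  have hib' := hbdI' i hiI'
  refine ⟨hℓ2, hr1, s' ++ i :: t, ?_, ?_, ?_, ?_, ?_⟩
  · -- IsSubSeq
    have hPvne : Psub P v ≠ [] := by
      intro h
      have h1 := hsubI.1
      rw [hIe, h] at h1; simp at h1
    have hk := minidx0_lt_length hPvne
    refine ⟨?_, ?_, ?_⟩
    · have h1 := hsubI.1
      rw [hIe] at h1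
      simp only [List.length_append, List.length_cons] at h1 ⊢
      omega
    · refine List.pairwise_append.mpr ⟨?_, ?_, ?_⟩
      · have := hsubI'.2.1; rw [hIe'] at this
        exact (List.pairwise_append.mp this).1
      · have := hsubI.2.1; rw [hIe] at this
        exact (List.pairwise_append.mp this).2.1
      · intro a ha b hb
        have hai := hs'_lt a ha
        rcases List.mem_cons.mp hb with rfl | hb
        · exact hai
        · exact lt_trans hai (ht_gt b hb)
    · intro j hj
      rcases List.mem_append.mp hj with h | h
      · exact hsubI'.2.2 j (hIe' ▸ List.mem_append_left _ h)
      · exact hsubI.2.2 j (hIe ▸ List.mem_append_right _ h)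
  · exact List.mem_append_cons_self
  · -- bounds in [ℓ', r]
    intro j hj
    rcases List.mem_append.mp hj with h | h
    · have hb' := hbdI' j (hIe' ▸ List.mem_append_left _ h)
      have := hs'_lt j h
      exact ⟨hb'.1, by omega⟩
    · rcases List.mem_cons.mp h with rfl | h
      · exact ⟨hib'.1, hib.2⟩
      · have hb := hbdI j (hIe ▸ List.mem_append_right _ (List.mem_cons_of_mem _ h))
        have := ht_gt j h
        exact ⟨by omega, hb.2⟩
  · -- CT equality
    have hseq : seqAt T (s' ++ i :: t) = seqAt T s' ++ val T i :: seqAt T t := by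
      simp [seqAt]
    have hvs'' : ∀ y ∈ seqAt T s', val T i < y := by
      intro y hy; obtain ⟨x, hx, rfl⟩ := List.mem_map.mp hy; exact hvs' x hx
    have hvt'' : ∀ y ∈ seqAt T t, val T i < y := by
      intro y hy; obtain ⟨x, hx, rfl⟩ := List.mem_map.mp hy; exact hvt x hx
    rw [hseq, CT_append _ _ _ hvs'' hvt'', hLs', hRt]
    have hPvne : Psub P v ≠ [] := by
      intro h
      have h1 := hsubI.1
      rw [hIe, h] at h1; simp at h1
    conv_rhs => rw [CT]
    simp [hPvne]
  · -- min value
    have hseq : seqAt T (s' ++ i :: t) = seqAt T s' ++ val T i :: seqAt T t := by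
      simp [seqAt]
    have hvs'' : ∀ y ∈ seqAt T s', val T i < y := by
      intro y hy; obtain ⟨x, hx, rfl⟩ := List.mem_map.mp hy; exact hvs' x hx
    have hvt'' : ∀ y ∈ seqAt T t, val T i < y := by
      intro y hy; obtain ⟨x, hx, rfl⟩ := List.mem_map.mp hy; exact hvt x hx
    rw [hseq, minval_eq _ _ _ hvs'' hvt'']

end CTAux

/-- For every pivot `(v, i) ∈ [1,m] × [1,n]`, there exists at most one
minimal fixed-interval with pivot `(v, i)`. -/
theorem at_most_one_minimal_fixed_interval
    (T P : List ℤ) (hT : T.Nodup) (hP : P.Nodup)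
    (hm : 1 ≤ P.length) (hmn : P.length ≤ T.length)
    (v i : ℕ) (hv : 1 ≤ v ∧ v ≤ P.length) (hi : 1 ≤ i ∧ i ≤ T.length)
    (ℓ r ℓ' r' : ℕ)
    (h1 : IsMinFixedInterval T P v i ℓ r) (h2 : IsMinFixedInterval T P v i ℓ' r') :
    ℓ = ℓ' ∧ r = r' := by
  obtain ⟨hf1, hmin1⟩ := h1
  obtain ⟨hf2, hmin2⟩ := h2
  have hcross1 : IsFixedInterval T P v i ℓ' r := CTAux.cross_fixed T P hT v i ℓ r ℓ' r' hf1 hf2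
  have hcross2 : IsFixedInterval T P v i ℓ r' := CTAux.cross_fixed T P hT v i ℓ' r' ℓ r hf2 hf1
  have hℓ : ℓ = ℓ' := by
    rcases le_or_gt ℓ ℓ' with h | h
    · by_contra hne
      exact hmin1 ⟨ℓ', r, hcross1, h, le_refl r, by simp [Prod.ext_iff]; intro; omega⟩
    · by_contra hne
      exact hmin2 ⟨ℓ, r', hcross2, le_of_lt h, le_refl r', by simp [Prod.ext_iff]; omega⟩
  subst hℓ
  have hr : r = r' := by
    rcases le_or_gt r r' with h | h
    · by_contra hne
      exact hmin2 ⟨ℓ, r, hf1, le_refl ℓ, h, by simp [Prod.ext_iff]; omega⟩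
    · by_contra hne
      exact hmin1 ⟨ℓ, r', hf2, le_refl ℓ, le_of_lt h, by simp [Prod.ext_iff]; omega⟩
  exact ⟨rfl, hr⟩
end

section
/- Let (v, i) be a pivot. If [ℓ, r] and [ℓ', r'] are both fixed-intervals with pivot (v, i), then [ℓ', r] is also a fixed-interval with pivot (v, i); in particular, the intersection [max(ℓ,ℓ'), min(r,r')] of two fixed-intervals with the same pivot is again a fixed-interval with that pivot. -/
section Helpers

def bsize : BTree → ℕ
  | .nil => 0
  | .node a b => bsize a + bsize b + 1

theorem CT_ne_nil {l : List ℤ} (h : l ≠ []) :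
    CT l = .node (CT (l.take (minidx0 l))) (CT (l.drop (minidx0 l + 1))) := by
  rw [CT]; simp [h]

theorem CT_size (l : List ℤ) : bsize (CT l) = l.length := by
  rw [CT]
  split
  · rename_i h; simp [h, bsize]
  · rename_i h
    have h1 := minidx0_lt_length h
    have h0 : 0 < l.length := List.length_pos_iff.mpr h
    rw [bsize, CT_size, CT_size]
    simp [List.length_take, List.length_drop]
    omega
termination_by l.length
decreasing_by
  · rename_i h
    have := minidx0_lt_length h
    simp [List.length_take]; omega
  · rename_i h
    have : 0 < l.length := List.length_pos_iff.mpr h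
    simp [List.length_drop]; omega

theorem minval_le {l : List ℤ} {a : ℤ} (h : a ∈ l) : minval l ≤ a := by
  have hne : l ≠ [] := List.ne_nil_of_mem h
  obtain ⟨m, hm⟩ := WithTop.ne_top_iff_exists.mp (List.minimum_ne_top_of_ne_nil hne)
  have hv : minval l = m := by simp [minval, ← hm]
  rw [hv]
  exact List.minimum_le_of_mem h hm.symm

theorem minval_eq {l : List ℤ} {a : ℤ} (h : a ∈ l) (hle : ∀ b ∈ l, a ≤ b) :
    minval l = a := by
  have : l.minimum = (a : WithTop ℤ) := List.minimum_eq_coe_iff.mpr ⟨h, hle⟩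
  simp [minval, this]

theorem minidx0_eq {l : List ℤ} (hnd : l.Nodup) {k : ℕ} (hk : k < l.length)
    (h : l[k] = minval l) : minidx0 l = k := by
  rw [minidx0, ← h, hnd.idxOf_getElem]

theorem val_eq_getElem {T : List ℤ} {j : ℕ} (h1 : 1 ≤ j) (h2 : j ≤ T.length) :
    val T j = T[j - 1]'(by omega) := by
  rw [val, List.getD_eq_getElem]

theorem seqAt_nodup {T : List ℤ} {I : List ℕ} (hT : T.Nodup)
    (hs : I.Pairwise (· < ·)) (hb : ∀ j ∈ I, 1 ≤ j ∧ j ≤ T.length) :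
    (seqAt T I).Nodup := by
  rw [seqAt]
  refine List.Nodup.map_on ?_ hs.nodup
  intro x hx y hy hxy
  obtain ⟨hx1, hx2⟩ := hb x hx
  obtain ⟨hy1, hy2⟩ := hb y hy
  rw [val_eq_getElem hx1 hx2, val_eq_getElem hy1 hy2] at hxy
  have := (List.Nodup.getElem_inj_iff hT).mp hxy
  omega

theorem mem_take_lt {I : List ℕ} (hs : I.Pairwise (· < ·)) {k : ℕ} (hk : k < I.length)
    {j : ℕ} (hj : j ∈ I.take k) : j < I[k] := by
  obtain ⟨a, ha, rfl⟩ := List.getElem_of_mem hj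
  have ha' : a < k ∧ a < I.length := by simpa [List.length_take] using ha
  obtain ⟨ha', _⟩ := ha'
  rw [List.getElem_take]
  exact List.pairwise_iff_getElem.mp hs a k (by omega) hk ha'

theorem mem_drop_ge {I : List ℕ} (hs : I.Pairwise (· < ·)) {k : ℕ} (hk : k < I.length)
    {j : ℕ} (hj : j ∈ I.drop k) : I[k] ≤ j := by
  obtain ⟨a, ha, rfl⟩ := List.getElem_of_mem hj
  rw [List.getElem_drop]
  rcases Nat.eq_zero_or_pos a with rfl | hpos
  · simp
  · have : k < k + a := by omega
    exact le_of_lt (List.pairwise_iff_getElem.mp hs k (k + a) hk (by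
      have := ha; simp [List.length_drop] at this; omega) this)

end Helpers

set_option maxHeartbeats 1000000 in
theorem fi_core (T P : List ℤ) (hT : T.Nodup) {v i ℓ r ℓ' r' : ℕ}
    (h1 : IsFixedInterval T P v i ℓ r) (h2 : IsFixedInterval T P v i ℓ' r') :
    ∃ J : List ℕ, IsSubSeq T.length (Psub P v).length J ∧ i ∈ J ∧
      (∀ j ∈ J, (j ≤ i ∧ ℓ' ≤ j ∧ j ≤ r') ∨ (i ≤ j ∧ ℓ ≤ j ∧ j ≤ r)) ∧
      CT (seqAt T J) = CT (Psub P v) ∧ val T i = minval (seqAt T J) := by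
  obtain ⟨hl1, hr1, I₁, ⟨hlen1, hsort1, hbd1⟩, hi1, hIn1, hCT1, hmin1⟩ := h1
  obtain ⟨hl2, hr2, I₂, ⟨hlen2, hsort2, hbd2⟩, hi2, hIn2, hCT2, hmin2⟩ := h2
  set Q := Psub P v with hQ
  set m := Q.length with hm
  -- basic lengths
  have hI1ne : I₁ ≠ [] := List.ne_nil_of_mem hi1
  have hmpos : 1 ≤ m := by
    rw [← hlen1]; exact List.length_pos_iff.mpr hI1ne
  have hQne : Q ≠ [] := by
    intro h; rw [h] at hm; simp [hm] at hmpos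
  have hseq1len : (seqAt T I₁).length = m := by simp [seqAt, hlen1]
  have hseq2len : (seqAt T I₂).length = m := by simp [seqAt, hlen2]
  have hseq1ne : seqAt T I₁ ≠ [] := by
    intro h; rw [h] at hseq1len; simp at hseq1len; omega
  have hseq2ne : seqAt T I₂ ≠ [] := by
    intro h; rw [h] at hseq2len; simp at hseq2len; omega
  -- indices of i
  set k₁ := I₁.idxOf i with hk₁def
  set k₂ := I₂.idxOf i with hk₂def
  have hk₁lt : k₁ < I₁.length := List.idxOf_lt_length_iff.mpr hi1
  have hk₂lt : k₂ < I₂.length := List.idxOf_lt_length_iff.mpr hi2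
  have hI₁k : I₁[k₁] = i := List.getElem_idxOf hk₁lt
  have hI₂k : I₂[k₂] = i := List.getElem_idxOf hk₂lt
  -- nodup of sequences
  have hnd1 : (seqAt T I₁).Nodup := seqAt_nodup hT hsort1 hbd1
  have hnd2 : (seqAt T I₂).Nodup := seqAt_nodup hT hsort2 hbd2
  -- minidx of sequences
  have hget1 : (seqAt T I₁)[k₁]'(by rw [hseq1len]; omega) = val T i := by
    simp [seqAt, hI₁k]
  have hget2 : (seqAt T I₂)[k₂]'(by rw [hseq2len]; omega) = val T i := by
    simp [seqAt, hI₂k]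
  have hmidx1 : minidx0 (seqAt T I₁) = k₁ :=
    minidx0_eq hnd1 (by rw [hseq1len]; omega) (by rw [hget1, hmin1])
  have hmidx2 : minidx0 (seqAt T I₂) = k₂ :=
    minidx0_eq hnd2 (by rw [hseq2len]; omega) (by rw [hget2, hmin2])
  -- identify k with minidx0 Q
  set m₀ := minidx0 Q with hm₀
  have hm₀lt : m₀ < m := minidx0_lt_length hQne
  rw [CT_ne_nil hseq1ne, CT_ne_nil hQne, hmidx1] at hCT1
  rw [CT_ne_nil hseq2ne, CT_ne_nil hQne, hmidx2] at hCT2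
  injection hCT1 with hL1 hR1
  injection hCT2 with hL2 hR2
  have hk₁m : k₁ = m₀ := by
    have := congrArg bsize hL1
    rw [CT_size, CT_size] at this
    simp [List.length_take, hseq1len] at this
    omega
  have hk₂m : k₂ = m₀ := by
    have := congrArg bsize hL2
    rw [CT_size, CT_size] at this
    simp [List.length_take, hseq2len] at this
    omega
  -- construct J
  set J := I₂.take k₂ ++ I₁.drop k₁ with hJ
  have hJsort : J.Pairwise (· < ·) := by
    rw [hJ, List.pairwise_append]
    refine ⟨hsort2.sublist (List.take_sublist _ _),
      hsort1.sublist (List.drop_sublist _ _), ?_⟩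
    intro a ha b hb
    have ha1 := mem_take_lt hsort2 hk₂lt ha
    have hb1 := mem_drop_ge hsort1 hk₁lt hb
    rw [hI₂k] at ha1; rw [hI₁k] at hb1
    omega
  have hJbd : ∀ j ∈ J, 1 ≤ j ∧ j ≤ T.length := by
    intro j hj
    rcases List.mem_append.mp hj with h | h
    · exact hbd2 j (List.mem_of_mem_take h)
    · exact hbd1 j (List.mem_of_mem_drop h)
  have hiJ : i ∈ J := by
    refine List.mem_append_right _ ?_
    rw [List.drop_eq_getElem_cons hk₁lt, ← hI₁k]
    exact List.mem_cons_self
  have hJseq : seqAt T J = (seqAt T I₂).take k₂ ++ (seqAt T I₁).drop k₁ := by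
    simp [hJ, seqAt, List.map_take, List.map_drop]
  have hJlen : J.length = m := by
    rw [hJ]
    simp [List.length_take, List.length_drop, hlen1, hlen2]
    omega
  have hJlen' : (seqAt T J).length = m := by simp [seqAt, hJlen]
  have hJseqne : seqAt T J ≠ [] := by
    intro h; rw [h] at hJlen'; simp at hJlen'; omega
  have h0 : ((seqAt T I₂).take k₂).length = k₂ := by
    rw [List.length_take]; omega
  have hminJ : minval (seqAt T J) = val T i := by
    apply minval_eq
    · exact List.mem_map_of_mem hiJ
    · intro b hb
      obtain ⟨j, hjJ, rfl⟩ := List.mem_map.mp hb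
      rcases List.mem_append.mp hjJ with h | h
      · have : val T j ∈ seqAt T I₂ :=
          List.mem_map_of_mem (List.mem_of_mem_take h)
        rw [hmin2]; exact minval_le this
      · have : val T j ∈ seqAt T I₁ :=
          List.mem_map_of_mem (List.mem_of_mem_drop h)
        rw [hmin1]; exact minval_le this
  have hndJ : (seqAt T J).Nodup := seqAt_nodup hT hJsort hJbd
  have hk₂J : k₂ < (seqAt T J).length := by omega
  have hgetJ : (seqAt T J)[k₂]'hk₂J = val T i := by
    rw [List.getElem_eq_iff, hJseq, List.getElem?_append_right (by omega), h0,
        Nat.sub_self, List.getElem?_drop, Nat.add_zero,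
        List.getElem?_eq_getElem (by omega), hget1]
  have hmidxJ : minidx0 (seqAt T J) = k₂ :=
    minidx0_eq hndJ hk₂J (hgetJ.trans hminJ.symm)
  have hCTJ : CT (seqAt T J) = CT Q := by
    have htake : (seqAt T J).take k₂ = (seqAt T I₂).take k₂ := by
      rw [hJseq]; exact List.take_left' h0
    have hdrop : (seqAt T J).drop (k₂ + 1) = (seqAt T I₁).drop (k₁ + 1) := by
      rw [hJseq, show k₂ + 1 = ((seqAt T I₂).take k₂).length + 1 from by rw [h0],
          List.drop_append, List.drop_drop]
      rw [List.drop_eq_nil_of_le (as := (seqAt T I₂).take k₂) (by omega), List.nil_append,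
        Nat.add_sub_cancel_left]
    rw [CT_ne_nil hJseqne, hmidxJ, CT_ne_nil hQne, htake, hdrop, hL2, hR1]
  refine ⟨J, ⟨hJlen, hJsort, hJbd⟩, hiJ, ?_, hCTJ, hminJ.symm⟩
  intro j hj
  rcases List.mem_append.mp hj with h | h
  · left
    have hlt := mem_take_lt hsort2 hk₂lt h
    rw [hI₂k] at hlt
    have := hIn2 j (List.mem_of_mem_take h)
    omega
  · right
    have hge := mem_drop_ge hsort1 hk₁lt h
    rw [hI₁k] at hge
    have := hIn1 j (List.mem_of_mem_drop h)
    omega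

theorem fi_comb {T P : List ℤ} (hT : T.Nodup) {v i ℓ r ℓ' r' : ℕ}
    (h1 : IsFixedInterval T P v i ℓ r) (h2 : IsFixedInterval T P v i ℓ' r') :
    IsFixedInterval T P v i ℓ' r := by
  have hi1 : ℓ ≤ i ∧ i ≤ r := by
    obtain ⟨_, _, I, _, hiI, hb, _, _⟩ := h1; exact hb i hiI
  have hi2 : ℓ' ≤ i ∧ i ≤ r' := by
    obtain ⟨_, _, I, _, hiI, hb, _, _⟩ := h2; exact hb i hiI
  obtain ⟨J, hss, hiJ, hch, hct, hmv⟩ := fi_core T P hT h1 h2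
  refine ⟨h2.1, h1.2.1, J, hss, hiJ, fun j hj => ?_, hct, hmv⟩
  rcases hch j hj with h | h <;> omega
/-- If `[ℓ, r]` and `[ℓ', r']` are both fixed-intervals with pivot `(v, i)`,
then `[ℓ', r]` is also a fixed-interval with pivot `(v, i)`; in particular, the intersection
`[max(ℓ,ℓ'), min(r,r')]` of two fixed-intervals with the same pivot is again a fixed-interval
with that pivot. -/
theorem fixed_interval_combine
    (T P : List ℤ) (hT : T.Nodup) (hP : P.Nodup)
    (hm : 1 ≤ P.length) (hmn : P.length ≤ T.length)
    (v i : ℕ) (hv : 1 ≤ v ∧ v ≤ P.length) (hi : 1 ≤ i ∧ i ≤ T.length)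
    (ℓ r ℓ' r' : ℕ)
    (h1 : IsFixedInterval T P v i ℓ r) (h2 : IsFixedInterval T P v i ℓ' r') :
    IsFixedInterval T P v i ℓ' r ∧
      IsFixedInterval T P v i (max ℓ ℓ') (min r r') := by
  have hi1 : ℓ ≤ i ∧ i ≤ r := by
    obtain ⟨_, _, I, _, hiI, hb, _, _⟩ := h1; exact hb i hiI
  have hi2 : ℓ' ≤ i ∧ i ≤ r' := by
    obtain ⟨_, _, I, _, hiI, hb, _, _⟩ := h2; exact hb i hiI
  refine ⟨fi_comb hT h1 h2, ?_⟩
  rcases le_total ℓ ℓ' with hll | hll <;> rcases le_total r r' with hrr | hrr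
  · rw [max_eq_right hll, min_eq_left hrr]
    exact fi_comb hT h1 h2
  · rw [max_eq_right hll, min_eq_right hrr]
    exact h2
  · rw [max_eq_left hll, min_eq_left hrr]
    exact h1
  · rw [max_eq_left hll, min_eq_right hrr]
    exact fi_comb hT h2 h1
end

section
/- Let 𝓜 = { mfi(minidx(P), i) : i ∈ [1,n] }. Every minimal occurrence interval [ℓ, r] for P over T belongs to 𝓜, i.e., [ℓ, r] = mfi(minidx(P), i) for some i ∈ [1,n]. -/
section Aux

lemma minimum_eq_minval (P : List ℤ) (hP : P ≠ []) : P.minimum = (minval P : WithTop ℤ) := by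
  obtain ⟨a, ha⟩ := WithTop.ne_top_iff_exists.mp (List.minimum_ne_top_of_ne_nil hP)
  simp [minval, ← ha]

lemma minval_mem (P : List ℤ) (hP : P ≠ []) : minval P ∈ P :=
  List.minimum_mem (minimum_eq_minval P hP)

lemma minval_le_val (P : List ℤ) (hP : P ≠ []) {j : ℕ} (h1 : 1 ≤ j) (h2 : j ≤ P.length) :
    minval P ≤ val P j := by
  have hj : j - 1 < P.length := by omega
  have hmem : P.getD (j-1) 0 ∈ P := by
    rw [List.getD_eq_getElem _ _ hj]; exact List.getElem_mem hj
  have h3 := List.minimum_le_of_mem' hmem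
  rw [minimum_eq_minval P hP] at h3
  exact_mod_cast h3

lemma val_root (P : List ℤ) (hP : P ≠ []) : val P (minidx0 P + 1) = minval P := by
  have hlt := minidx0_lt_length hP
  rw [val]
  simp only [Nat.add_sub_cancel]
  rw [List.getD_eq_getElem _ _ hlt]
  exact List.getElem_idxOf hlt

lemma leftEnd_root (P : List ℤ) (hP : P ≠ []) : leftEnd P (minidx0 P + 1) = 1 := by
  have hlt := minidx0_lt_length hP
  have he : ((Finset.Icc 1 (minidx0 P + 1 - 1)).filter
      (fun j => val P j < val P (minidx0 P + 1))) = ∅ := by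
    rw [Finset.filter_eq_empty_iff]
    intro j hj
    rw [Finset.mem_Icc] at hj
    rw [val_root P hP]
    exact not_lt.mpr (minval_le_val P hP hj.1 (by omega))
  rw [leftEnd, he]
  simp

lemma rightEnd_root (P : List ℤ) (hP : P ≠ []) : rightEnd P (minidx0 P + 1) = P.length := by
  have he : ((Finset.Icc (minidx0 P + 1 + 1) P.length).filter
      (fun j => val P j < val P (minidx0 P + 1))) = ∅ := by
    rw [Finset.filter_eq_empty_iff]
    intro j hj
    rw [Finset.mem_Icc] at hj
    rw [val_root P hP]
    exact not_lt.mpr (minval_le_val P hP (by omega) hj.2)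
  rw [rightEnd, he]
  simp

lemma Psub_root (P : List ℤ) (hP : P ≠ []) : Psub P (minidx0 P + 1) = P := by
  rw [Psub, leftEnd_root P hP, rightEnd_root P hP, subslice]
  simp

end Aux

/-- Every minimal occurrence interval `[ℓ, r]` for `P` over `T` belongs to
`𝓜 = { mfi(minidx(P), i) : i ∈ [1,n] }`, i.e., `[ℓ, r] = mfi(minidx(P), i)` for some
`i ∈ [1,n]` (here `minidx0 P + 1` is the 1-based position of the minimum of `P`, that is,
the root of `CT(P)`). -/
theorem minimal_occurrence_mem_M
    (T P : List ℤ) (hT : T.Nodup) (hP : P.Nodup)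
    (hm : 1 ≤ P.length) (hmn : P.length ≤ T.length)
    (ℓ r : ℕ) (h : IsMinOccInterval T P ℓ r) :
    ∃ i, 1 ≤ i ∧ i ≤ T.length ∧ IsMinFixedInterval T P (minidx0 P + 1) i ℓ r := by
  have hPne : P ≠ [] := by intro hc; rw [hc] at hm; simp at hm
  obtain ⟨⟨hl1, hrT, I, ⟨⟨hIlen, hIsort, hIbd⟩, hCT⟩, hIin⟩, hmin⟩ := h
  have hIne : I ≠ [] := by
    intro hc; rw [hc] at hIlen; simp at hIlen; omega
  have hSne : seqAt T I ≠ [] := by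
    rw [seqAt]; simpa using hIne
  have hmem := minval_mem (seqAt T I) hSne
  rw [seqAt, List.mem_map] at hmem
  obtain ⟨i, hiI, hvi⟩ := hmem
  have hib := hIbd i hiI
  refine ⟨i, hib.1, hib.2, ?_, ?_⟩
  · exact ⟨hl1, hrT, I, by rw [Psub_root P hPne]; exact ⟨hIlen, hIsort, hIbd⟩, hiI, hIin,
      by rw [Psub_root P hPne]; exact hCT, by rw [seqAt]; exact hvi⟩
  · rintro ⟨ℓ', r', ⟨hl1', hrT', I', hIs', _, hIin', hCT', _⟩, hss⟩
    rw [Psub_root P hPne] at hIs' hCT'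
    exact hmin ⟨ℓ', r', ⟨hl1', hrT', I', ⟨hIs', hCT'⟩, hIin'⟩, hss⟩
end
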